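/- Let b, b' ∈ 𝓑' and set c_i = max(b'_i − b_i, 0) for each i. Then x_1^{c_1} x_2^{c_2} ⋯ x_n^{c_n} · I_b ⊆ I_{b'}. -/

import Mathlib

open MvPolynomial

/-- The complete homogeneous symmetric polynomial of degree `j` in the variables indexed
by the finite set `S`. -/
noncomputable def hset (n : ℕ) (S : Finset (Fin n)) (j : ℕ) : MvPolynomial (Fin n) ℂ :=
  ∑ μ ∈ Finset.univ.filter (fun μ : Sym (Fin n) j => ∀ i ∈ μ, i ∈ S),
    (μ.val.map MvPolynomial.X).prod

/-- The complete homogeneous symmetric polynomial `h_j(x_1, …, x_k)` of degree `j` in the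
first `k` variables (these are the 0-based indices `0, …, k-1`). -/
noncomputable def hfirst (n k j : ℕ) : MvPolynomial (Fin n) ℂ :=
  hset n (Finset.univ.filter (fun i : Fin n => (i : ℕ) < k)) j

/-- The ideal `I_b` generated by `h_{b_1}(x_1), h_{b_2}(x_1,x_2), …, h_{b_n}(x_1,…,x_n)`. -/
noncomputable def Ib {n : ℕ} (b : Fin n → ℕ) : Ideal (MvPolynomial (Fin n) ℂ) :=
  Ideal.span (Set.range fun i : Fin n => hfirst n ((i : ℕ) + 1) (b i))

/-- `b ∈ 𝓑'`: a sequence of positive integers with `b i ≥ b (i+1) ≥ b i - 1` for all `i`. -/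
def Bprime {n : ℕ} (b : Fin n → ℕ) : Prop :=
  (∀ i, 0 < b i) ∧ ∀ (i : ℕ) (h : i + 1 < n),
    b ⟨i + 1, h⟩ ≤ b ⟨i, Nat.lt_of_succ_lt h⟩ ∧
      b ⟨i, Nat.lt_of_succ_lt h⟩ ≤ b ⟨i + 1, h⟩ + 1

lemma hset_empty (n j : ℕ) : hset n ∅ (j+1) = 0 := by
  classical
  unfold hset
  rw [Finset.filter_false_of_mem, Finset.sum_empty]
  intro μ _ hμ
  obtain ⟨i, hi⟩ := Multiset.card_pos_iff_exists_mem.1 (by rw [μ.2]; omega : 0 < Multiset.card μ.val)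
  exact absurd (hμ i hi) (by simp)

lemma hset_succ (n : ℕ) (S : Finset (Fin n)) (a : Fin n) (ha : a ∈ S) (j : ℕ) :
    hset n S (j+1) = hset n (S.erase a) (j+1) + X a * hset n S j := by
  classical
  unfold hset
  rw [Finset.mul_sum,
    ← Finset.sum_filter_add_sum_filter_not
      (Finset.univ.filter (fun μ : Sym (Fin n) (j+1) => ∀ i ∈ μ, i ∈ S)) (fun μ => a ∉ μ)]
  congr 1
  · apply Finset.sum_congr _ (fun _ _ => rfl)
    ext μ
    simp only [Finset.mem_filter, Finset.filter_filter, Finset.mem_univ, true_and,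
      Finset.mem_erase]
    constructor
    · rintro ⟨h1, h2⟩ i hi
      exact ⟨fun h => h2 (h ▸ hi), h1 i hi⟩
    · intro h
      exact ⟨fun i hi => (h i hi).2, fun hmem => (h a hmem).1 rfl⟩
  · symm
    refine Finset.sum_bij (fun (ν : Sym (Fin n) j) _ => a ::ₛ ν) ?_ ?_ ?_ ?_
    · intro ν hν
      simp only [Finset.mem_filter, Finset.filter_filter, Finset.mem_univ, true_and] at hν ⊢
      refine ⟨fun i hi => ?_, by simp [Sym.mem_cons]⟩
      rcases Sym.mem_cons.1 hi with h | h
      · exact h ▸ ha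
      · exact hν i h
    · intro ν₁ _ ν₂ _ h
      exact (Sym.cons_inj_right a ν₁ ν₂).1 h
    · intro μ hμ
      simp only [Finset.mem_filter, Finset.filter_filter, Finset.mem_univ, true_and,
        not_not] at hμ
      refine ⟨μ.erase a hμ.2, ?_, Sym.cons_erase hμ.2⟩
      simp only [Finset.mem_filter, Finset.mem_univ, true_and]
      intro i hi
      exact hμ.1 i (Multiset.mem_of_mem_erase hi)
    · intro ν _
      have : (a ::ₛ ν).val = a ::ₘ ν.val := rfl
      rw [this, Multiset.map_cons, Multiset.prod_cons]

lemma hfirst_zero (n j : ℕ) : hfirst n 0 (j+1) = 0 := by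
  rw [hfirst, show (Finset.univ.filter (fun i : Fin n => (i : ℕ) < 0)) = ∅ by simp,
    hset_empty]

lemma hfirst_succ (n k j : ℕ) (hk : k < n) :
    hfirst n (k+1) (j+1) = hfirst n k (j+1) + X ⟨k, hk⟩ * hfirst n (k+1) j := by
  have h1 : (⟨k, hk⟩ : Fin n) ∈ Finset.univ.filter (fun i : Fin n => (i:ℕ) < k+1) := by simp
  have h2 : (Finset.univ.filter (fun i : Fin n => (i:ℕ) < k+1)).erase ⟨k, hk⟩
      = Finset.univ.filter (fun i : Fin n => (i:ℕ) < k) := by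
    ext i
    simp only [Finset.mem_erase, Finset.mem_filter, Finset.mem_univ, true_and, ne_eq, Fin.ext_iff, Fin.val_mk]
    omega
  rw [hfirst, hset_succ n _ _ h1, h2]
  rfl

lemma lemA {n : ℕ} (b' : Fin n → ℕ) (hb' : Bprime b') :
    ∀ K (hK : K < n) (d : ℕ), hfirst n (K+1) (b' ⟨K, hK⟩ + d) ∈ Ib b' := by
  intro K
  induction K with
  | zero =>
    intro hK d
    induction d with
    | zero => exact Ideal.subset_span ⟨⟨0, hK⟩, by simp⟩
    | succ d IHd =>
      rw [show b' ⟨0, hK⟩ + (d+1) = (b' ⟨0, hK⟩ + d) + 1 by omega, hfirst_succ n 0 _ hK,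
        hfirst_zero, zero_add]
      exact Ideal.mul_mem_left _ _ IHd
  | succ K IH =>
    intro hK d
    induction d with
    | zero => exact Ideal.subset_span ⟨⟨K+1, hK⟩, by simp⟩
    | succ d IHd =>
      rw [show b' ⟨K+1, hK⟩ + (d+1) = (b' ⟨K+1, hK⟩ + d) + 1 by omega, hfirst_succ n (K+1) _ hK]
      apply Ideal.add_mem
      · have hle : b' ⟨K, by omega⟩ ≤ b' ⟨K+1, hK⟩ + d + 1 := by
          have := (hb'.2 K hK).2
          omega
        obtain ⟨d', hd'⟩ : ∃ d', b' ⟨K, by omega⟩ + d' = b' ⟨K+1, hK⟩ + d + 1 :=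
          ⟨b' ⟨K+1, hK⟩ + d + 1 - b' ⟨K, by omega⟩, by omega⟩
        rw [show b' ⟨K+1, hK⟩ + d + 1 = b' ⟨K, by omega⟩ + d' from hd'.symm]
        exact IH (by omega) d'
      · exact Ideal.mul_mem_left _ _ IHd

lemma claimS {n : ℕ} (b b' : Fin n → ℕ) (hb : Bprime b) (hb' : Bprime b') :
    ∀ K (hKn : K ≤ n) (j : ℕ), 1 ≤ j → (∀ (hK0 : 0 < K), b ⟨K-1, by omega⟩ ≤ j) →
      (∏ i ∈ Finset.univ.filter (fun i : Fin n => (i:ℕ) < K), X i ^ (b' i - b i)) *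
        hfirst n K j ∈ Ib b' := by
  intro K
  induction K with
  | zero =>
    intro _ j hj _
    obtain ⟨j', rfl⟩ : ∃ j', j = j' + 1 := ⟨j - 1, by omega⟩
    rw [hfirst_zero, mul_zero]
    exact Ideal.zero_mem _
  | succ K IH =>
    intro hKn j hj hbj
    have hKn' : K < n := by omega
    have hbKj : b ⟨K, hKn'⟩ ≤ j := hbj (by omega)
    -- inner claim
    have T : ∀ c (j : ℕ), 1 ≤ j → b ⟨K, hKn'⟩ ≤ j → b' ⟨K, hKn'⟩ ≤ j + c →
        (∏ i ∈ Finset.univ.filter (fun i : Fin n => (i:ℕ) < K), X i ^ (b' i - b i)) *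
          (X (⟨K, hKn'⟩ : Fin n) ^ c * hfirst n (K+1) j) ∈ Ib b' := by
      intro c
      induction c with
      | zero =>
        intro j hj hbKj hb'Kj
        obtain ⟨d, rfl⟩ : ∃ d, j = b' ⟨K, hKn'⟩ + d := ⟨j - b' ⟨K, hKn'⟩, by omega⟩
        rw [pow_zero, one_mul]
        exact Ideal.mul_mem_left _ _ (lemA b' hb' K hKn' d)
      | succ c IHc =>
        intro j hj hbKj hb'Kj
        have key : (X (⟨K, hKn'⟩ : Fin n)) ^ (c+1) * hfirst n (K+1) j
            = X (⟨K, hKn'⟩ : Fin n) ^ c * hfirst n (K+1) (j+1)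
              - X (⟨K, hKn'⟩ : Fin n) ^ c * hfirst n K (j+1) := by
          rw [hfirst_succ n K j hKn']
          ring
        rw [key, mul_sub]
        apply Ideal.sub_mem
        · exact IHc (j+1) (by omega) (by omega) (by omega)
        · have hKprev : 0 < K → b ⟨K-1, by omega⟩ ≤ j + 1 := by
            intro hK0
            have heq : (⟨K-1+1, by omega⟩ : Fin n) = ⟨K, hKn'⟩ := by
              ext; simp; omega
            have := (hb.2 (K-1) (by omega)).2
            rw [heq] at this
            omega
          have hmem := IH (by omega) (j+1) (by omega) hKprev
          have := Ideal.mul_mem_left _ (X (⟨K, hKn'⟩ : Fin n) ^ c) hmem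
          convert this using 1
          ring
    have hins : Finset.univ.filter (fun i : Fin n => (i:ℕ) < K+1)
        = insert (⟨K, hKn'⟩ : Fin n) (Finset.univ.filter (fun i : Fin n => (i:ℕ) < K)) := by
      ext i
      simp only [Finset.mem_insert, Finset.mem_filter, Finset.mem_univ, true_and,
        Fin.ext_iff, Fin.val_mk]
      omega
    rw [hins, Finset.prod_insert (by simp)]
    have := T (b' ⟨K, hKn'⟩ - b ⟨K, hKn'⟩) j hj hbKj (by omega)
    convert this using 1
    ring

theorem stmt7 {n : ℕ} (b b' : Fin n → ℕ) (hb : Bprime b) (hb' : Bprime b') :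
    ∀ p ∈ Ib b, (∏ i, X i ^ (b' i - b i)) * p ∈ Ib b' := by
  intro p hp
  induction hp using Submodule.span_induction with
  | mem x hx =>
    obtain ⟨i, rfl⟩ := hx
    rw [← Finset.prod_filter_mul_prod_filter_not Finset.univ (fun i' : Fin n => (i':ℕ) < (i:ℕ)+1),
      mul_comm (∏ i' ∈ Finset.univ.filter (fun i' : Fin n => (i':ℕ) < (i:ℕ)+1), X i' ^ (b' i' - b i')),
      mul_assoc]
    apply Ideal.mul_mem_left
    exact claimS b b' hb hb' ((i:ℕ)+1) (by omega) (b i) (hb.1 i)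
      (fun _ => le_of_eq (by norm_num))
  | zero => rw [mul_zero]; exact Ideal.zero_mem _
  | add x y _ _ hx hy => rw [mul_add]; exact Ideal.add_mem _ hx hy
  | smul r x _ hx =>
    rw [smul_eq_mul, mul_left_comm]
    exact Ideal.mul_mem_left _ _ hx
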